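/- Let (M, g) be a compact Riemannian manifold with boundary Σ, with positive Ricci curvature and with boundary having positive semi-definite second fundamental form. If α is a harmonic 1-form (dα = 0, d*α = 0) satisfying the relative (Dirichlet-type) boundary condition α ∧ n* = 0 on Σ, then the Bochner identity ∫_M (|∇α|² + Ric(α,α)) dv = -∫_Σ H·(α(n))² dσ forces α = 0. -/
import Mathlib


open MeasureTheory

/-- Bochner vanishing for relative harmonic 1-forms: if the Bochner identity
`∫_M (|∇α|² + Ric(α,α)) dv = -∫_Σ H (α(n))² dσ` holds, the Ricci curvature is
pointwise positive (on nonzero vectors) and the mean curvature `H` of the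
boundary is nonnegative (positive semi-definite second fundamental form),
then the harmonic 1-form `α` with `α ∧ n* = 0` on `Σ` vanishes identically.
Here `gradSq x = |∇α|²(x)` and `ric x = Ric(α,α)(x)` pointwise on `M`, and
`an y = α(n)(y)` on the boundary `Σ`. -/
theorem bochner_vanishing_relative
    {M S : Type*} [TopologicalSpace M] [MeasurableSpace M]
    [MeasurableSpace S]
    (μ : Measure M) [μ.IsOpenPosMeasure]
    (σ : Measure S)
    {V : Type*} [NormedAddCommGroup V] [NormedSpace ℝ V]
    (α : M → V) (gradSq ric : M → ℝ) (H an : S → ℝ)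
    (hαcont : Continuous α)
    (hriccont : Continuous ric)
    (hgrad_nonneg : ∀ x, 0 ≤ gradSq x)
    (hric_nonneg : ∀ x, 0 ≤ ric x)
    (hric_pos : ∀ x, α x ≠ 0 → 0 < ric x)
    (hH : ∀ y, 0 ≤ H y)
    (hint : Integrable (fun x => gradSq x + ric x) μ)
    (hbint : Integrable (fun y => H y * (an y) ^ 2) σ)
    (hbochner : ∫ x, (gradSq x + ric x) ∂μ = -∫ y, H y * (an y) ^ 2 ∂σ) :
    ∀ x, α x = 0 := by
  have hrhs : 0 ≤ ∫ y, H y * (an y) ^ 2 ∂σ :=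
    integral_nonneg fun y => mul_nonneg (hH y) (sq_nonneg _)
  have hlhs : ∫ x, (gradSq x + ric x) ∂μ ≤ 0 := by
    rw [hbochner]; linarith
  have hlhs' : 0 ≤ ∫ x, (gradSq x + ric x) ∂μ :=
    integral_nonneg fun x => add_nonneg (hgrad_nonneg x) (hric_nonneg x)
  have hzero : ∫ x, (gradSq x + ric x) ∂μ = 0 := le_antisymm hlhs hlhs'
  have hae : (fun x => gradSq x + ric x) =ᵐ[μ] 0 := by
    rw [← integral_eq_zero_iff_of_nonneg
      (fun x => add_nonneg (hgrad_nonneg x) (hric_nonneg x)) hint]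
    exact hzero
  intro x
  by_contra hx
  have hricx : 0 < ric x := hric_pos x hx
  set U : Set M := ric ⁻¹' Set.Ioi 0 with hU
  have hUopen : IsOpen U := isOpen_Ioi.preimage hriccont
  have hxU : x ∈ U := hricx
  have hUpos : 0 < μ U := hUopen.measure_pos μ ⟨x, hxU⟩
  have hsub : U ⊆ {x | gradSq x + ric x ≠ 0} := fun z hz => by
    have : 0 < ric z := hz
    have := hgrad_nonneg z
    simp only [Set.mem_setOf_eq]
    linarith
  have : μ {x | gradSq x + ric x ≠ 0} = 0 := by
    have := hae
    rw [Filter.EventuallyEq, ae_iff] at this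
    simpa using this
  exact absurd (measure_mono_null hsub this) (ne_of_gt hUpos)
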